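/- Let ρ_c > 0, R > 0, and let m, ρ : [0,R] → ℝ with m continuous, m(0) = 0, m differentiable on (0,R) with m′(r) = 4πr²ρ(r), ρ(r) ≥ ρ_c for all r ∈ (0,R), and suppose 2m(r)/r < 1 for all r ∈ (0,R] (no trapped shells). Then R < √(3/(8π ρ_c)). In particular, a regular hard star (for which ρ ≥ 1 in units where the critical density equals 1) has radius R < √(3/(8π)). -/

import Mathlib

open Real Set

/-- Bound on the radius of a regular star: if `m' = 4πr²ρ`, `m(0)=0`, `ρ ≥ ρc > 0`,
and no shell is trapped (`2m(r)/r < 1` on `(0,R]`), then `R < √(3/(8πρc))`. -/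
theorem stmt3 (ρc R : ℝ) (hρc : 0 < ρc) (hR : 0 < R) (m ρ : ℝ → ℝ)
    (hmc : ContinuousOn m (Icc 0 R)) (hm0 : m 0 = 0)
    (hderiv : ∀ r ∈ Ioo (0:ℝ) R, HasDerivAt m (4 * π * r ^ 2 * ρ r) r)
    (hρ : ∀ r ∈ Ioo (0:ℝ) R, ρc ≤ ρ r)
    (htrap : ∀ r ∈ Ioc (0:ℝ) R, 2 * m r / r < 1) :
    R < Real.sqrt (3 / (8 * π * ρc)) := by
  have hπ := Real.pi_pos
  set g : ℝ → ℝ := fun r => m r - 4 * π / 3 * ρc * r ^ 3 with hg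
  have hgd : ∀ r ∈ Ioo (0:ℝ) R, HasDerivAt g (4 * π * r ^ 2 * ρ r - 4 * π * ρc * r ^ 2) r := by
    intro r hr
    have h1 := (hderiv r hr).sub (((hasDerivAt_pow 3 r).const_mul (4 * π / 3 * ρc)))
    convert h1 using 1
    · rfl
    · rfl
    · rfl
    · norm_num
      ring
  have hmono : MonotoneOn g (Icc 0 R) := by
    apply monotoneOn_of_deriv_nonneg (convex_Icc 0 R)
    · exact (hmc.sub (Continuous.continuousOn (by continuity)))
    · rw [interior_Icc]
      intro x hx
      exact (hgd x hx).differentiableAt.differentiableWithinAt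
    · rw [interior_Icc]
      intro x hx
      rw [(hgd x hx).deriv]
      have h1 : ρc ≤ ρ x := hρ x hx
      nlinarith [sq_nonneg x, hx.1, mul_le_mul_of_nonneg_left h1 (le_of_lt (mul_pos (mul_pos (by norm_num : (0:ℝ)<4) hπ) (pow_pos hx.1 2)))]
  have hg0 : g 0 = 0 := by simp [hg, hm0]
  have hgR : 0 ≤ g R := by
    rw [← hg0]
    exact hmono (by constructor <;> [rfl; exact le_of_lt hR]) (by constructor <;> [exact le_of_lt hR; rfl]) (le_of_lt hR)
  have hmR : 4 * π / 3 * ρc * R ^ 3 ≤ m R := by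
    have := hgR; simp [hg] at this; linarith
  have htR := htrap R ⟨hR, le_refl R⟩
  have hmRlt : 2 * m R < R := by
    rw [div_lt_one hR] at htR; linarith
  have hR2 : R ^ 2 < 3 / (8 * π * ρc) := by
    rw [lt_div_iff₀ (by positivity)]
    nlinarith
  rw [show R = Real.sqrt (R ^ 2) by rw [Real.sqrt_sq hR.le]]
  exact Real.sqrt_lt_sqrt (sq_nonneg R) hR2
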